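/- Let r ≤ 8 and Cl = Z^{1+r} with the standard blow-up form and K = -3L + E_1 + ... + E_r. Let S ⊆ K^⊥ be a set such that every element D of S satisfies D·L > 0, and such that S is pairwise nonnegative (C·D ≥ 0 for distinct C, D ∈ S). If v lies in the subgroup of K^⊥ generated by S, v² = -2, and v·L ≥ 0, then v is a nonnegative integer linear combination of elements of S. -/

import Mathlib

open Finset

/-- `Cl r = ℤ^{1+r}` represented as pairs `(d, e)` standing for `d·L + ∑ i, e i · E i`. -/
abbrev Cl (r : ℕ) := ℤ × (Fin r → ℤ)

/-- The blow-up intersection form: `L·L = 1`, `E i · E i = -1`, distinct basis vectors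
orthogonal. -/
def form {r : ℕ} (u v : Cl r) : ℤ := u.1 * v.1 - ∑ i, u.2 i * v.2 i

/-- The canonical class `K = -3L + E_1 + ⋯ + E_r`. -/
def Kcl (r : ℕ) : Cl r := (-3, fun _ => 1)

/-- The class of a line `L`. -/
def Lcl (r : ℕ) : Cl r := (1, fun _ => 0)

lemma form_comm {r} (u v : Cl r) : form u v = form v u := by
  simp [form, mul_comm]

lemma form_add_left {r} (u v w : Cl r) : form (u + v) w = form u w + form v w := by
  simp [form, add_mul, Finset.sum_add_distrib]; ring

lemma form_smul_left {r} (n : ℤ) (u w : Cl r) : form (n • u) w = n * form u w := by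
  simp only [form, Prod.smul_fst, Pi.smul_apply, Prod.smul_snd, smul_eq_mul]
  rw [mul_sub, Finset.mul_sum]
  simp [mul_assoc]

lemma form_zero_left {r} (w : Cl r) : form 0 w = 0 := by simp [form]

lemma form_neg_left {r} (u w : Cl r) : form (-u) w = -form u w := by
  have := form_smul_left (r := r) (-1) u w; simpa using this

lemma form_sub_left {r} (u v w : Cl r) : form (u - v) w = form u w - form v w := by
  rw [sub_eq_add_neg, form_add_left, form_neg_left]; ring

lemma form_sum_left {r} {ι : Type*} (s : Finset ι) (f : ι → Cl r) (w : Cl r) :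
    form (∑ i ∈ s, f i) w = ∑ i ∈ s, form (f i) w := by
  classical
  induction s using Finset.induction with
  | empty => simp [form_zero_left]
  | insert _ _ h ih => rw [Finset.sum_insert h, Finset.sum_insert h, form_add_left, ih]

lemma sum_eq_of_K {r} (w : Cl r) (hK : form w (Kcl r) = 0) : ∑ i, w.2 i = -3 * w.1 := by
  simp only [form, Kcl, mul_one] at hK
  linarith

lemma negdef {r : ℕ} (hr : r ≤ 8) (w : Cl r) (hK : form w (Kcl r) = 0) :
    form w w ≤ 0 ∧ (form w w = 0 → w = 0) := by
  have hsum := sum_eq_of_K w hK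
  have hCS : (∑ i, w.2 i) ^ 2 ≤ (r : ℤ) * ∑ i, w.2 i ^ 2 := by
    simpa using sq_sum_le_card_mul_sum_sq (s := (univ : Finset (Fin r))) (f := w.2)
  have hr' : (r : ℤ) ≤ 8 := by exact_mod_cast hr
  have hsumsq : (0:ℤ) ≤ ∑ i, w.2 i ^ 2 := Finset.sum_nonneg fun i _ => sq_nonneg _
  have h9 : 9 * w.1 ^ 2 ≤ 8 * ∑ i, w.2 i ^ 2 := by
    have : (-3 * w.1) ^ 2 ≤ (r:ℤ) * ∑ i, w.2 i ^ 2 := hsum ▸ hCS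
    nlinarith
  have hform : form w w = w.1 ^ 2 - ∑ i, w.2 i ^ 2 := by
    simp [form, sq]
  constructor
  · nlinarith
  · intro h0
    have hd : w.1 = 0 := by nlinarith
    have he : ∑ i, w.2 i ^ 2 = 0 := by nlinarith
    have hz : ∀ i ∈ (univ : Finset (Fin r)), w.2 i ^ 2 = 0 :=
      (Finset.sum_eq_zero_iff_of_nonneg fun i _ => sq_nonneg _).mp he
    ext
    · exact hd
    · rename_i i
      exact pow_eq_zero_iff (n := 2) (by norm_num) |>.mp (hz i (mem_univ i))

lemma form_even {r : ℕ} (w : Cl r) (hK : form w (Kcl r) = 0) : 2 ∣ form w w := by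
  have hsum := sum_eq_of_K w hK
  have h1 : 2 ∣ ∑ i, (w.2 i * w.2 i - w.2 i) := by
    refine Finset.dvd_sum fun i _ => ?_
    have h : w.2 i * w.2 i - w.2 i = (w.2 i - 1) * w.2 i := by ring
    rw [h]
    rcases Int.even_or_odd (w.2 i) with h | h
    · exact Dvd.dvd.mul_left h.two_dvd _
    · exact Dvd.dvd.mul_right
        (by simpa using (Int.even_sub_one.mpr (Int.not_even_iff_odd.mpr h)).two_dvd) _
  have h2 : 2 ∣ w.1 * w.1 + 3 * w.1 := by
    have h : w.1 * w.1 + 3 * w.1 = w.1 * (w.1 + 1) + 2 * w.1 := by ring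
    rw [h]
    exact dvd_add (Int.even_mul_succ_self w.1).two_dvd ⟨w.1, rfl⟩
  have h3 : form w w = (w.1 * w.1 + 3 * w.1) - (∑ i, (w.2 i * w.2 i - w.2 i)) := by
    simp only [form, Finset.sum_sub_distrib, hsum]
    ring
  rw [h3]
  exact dvd_sub h2 h1

lemma closure_rep {r} (S : Set (Cl r)) (v : Cl r) (hv : v ∈ AddSubgroup.closure S) :
    ∃ a : Cl r →₀ ℤ, (↑a.support ⊆ S) ∧ v = a.sum fun D n => n • D := by
  classical
  induction hv using AddSubgroup.closure_induction with
  | mem x hx =>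
    refine ⟨Finsupp.single x 1, ?_, ?_⟩
    · intro y hy
      have := Finsupp.support_single_subset hy
      simp only [Finset.mem_singleton] at this
      simpa [this] using hx
    · simp [Finsupp.sum_single_index]
  | zero => exact ⟨0, by simp, by simp⟩
  | add x y hx hy ihx ihy =>
    obtain ⟨a, ha, rfl⟩ := ihx
    obtain ⟨b, hb, rfl⟩ := ihy
    refine ⟨a + b, ?_, ?_⟩
    · intro y hy
      rcases Finset.mem_union.mp (Finsupp.support_add hy) with h | h
      · exact ha h
      · exact hb h
    · rw [Finsupp.sum_add_index' (fun D => zero_smul ℤ D) (fun D m n => add_smul m n D)]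
  | neg x hx ih =>
    obtain ⟨a, ha, rfl⟩ := ih
    refine ⟨-a, by simpa using ha, ?_⟩
    rw [Finsupp.sum_neg_index (fun D => zero_smul ℤ D)]
    rw [← Finsupp.sum_neg]
    simp

/-- For `r ≤ 8`: if `S ⊆ K^⊥` consists of classes meeting `L` positively and is pairwise
nonnegative, then any `v` in the subgroup generated by `S` with `v² = -2` and `v·L ≥ 0`
is a nonnegative integer linear combination of elements of `S`. -/
theorem neg_two_class_is_nonneg_combination (r : ℕ) (hr : r ≤ 8) (S : Set (Cl r))
    (hSK : ∀ D ∈ S, form D (Kcl r) = 0)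
    (hSL : ∀ D ∈ S, 0 < form D (Lcl r))
    (hSpair : ∀ C ∈ S, ∀ D ∈ S, C ≠ D → 0 ≤ form C D)
    (v : Cl r) (hv : v ∈ AddSubgroup.closure S)
    (hv2 : form v v = -2) (hvL : 0 ≤ form v (Lcl r)) :
    ∃ (n : ℕ) (c : Fin n → Cl r) (m : Fin n → ℕ),
      (∀ i, c i ∈ S) ∧ v = ∑ i, (m i : ℤ) • c i := by
  classical
  obtain ⟨a, haS, hva⟩ := closure_rep S v hv
  set T := a.support with hT
  set Tp := T.filter (fun D => 0 < a D) with hTp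
  set Tn := T.filter (fun D => a D < 0) with hTn
  set P := ∑ D ∈ Tp, a D • D with hP
  set N := ∑ D ∈ Tn, (-(a D)) • D with hN
  have hTpS : ∀ {D : Cl r}, D ∈ Tp → D ∈ S := fun hD =>
    haS (Finset.mem_coe.mpr (Finset.mem_filter.mp hD).1)
  have hTnS : ∀ {D : Cl r}, D ∈ Tn → D ∈ S := fun hD =>
    haS (Finset.mem_coe.mpr (Finset.mem_filter.mp hD).1)
  have hvPN : v = P - N := by
    rw [hva, Finsupp.sum]
    rw [← Finset.sum_filter_add_sum_filter_not T (fun D => 0 < a D) (fun D => a D • D)]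
    have hfe : T.filter (fun D => ¬ 0 < a D) = Tn := by
      refine Finset.filter_congr fun D hD => ?_
      have := Finsupp.mem_support_iff.mp hD
      constructor <;> intro h <;> omega
    rw [hfe]
    have hTnN : ∑ D ∈ Tn, a D • D = -N := by
      rw [hN, ← Finset.sum_neg_distrib]
      exact Finset.sum_congr rfl fun D _ => by rw [neg_smul, neg_neg]
    rw [hTnN, ← sub_eq_add_neg]
  have hPK : form P (Kcl r) = 0 := by
    rw [hP, form_sum_left]
    exact Finset.sum_eq_zero fun D hD => by
      rw [form_smul_left, hSK D (hTpS hD), mul_zero]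
  have hNK : form N (Kcl r) = 0 := by
    rw [hN, form_sum_left]
    exact Finset.sum_eq_zero fun D hD => by
      rw [form_smul_left, hSK D (hTnS hD), mul_zero]
  have hPN : 0 ≤ form P N := by
    rw [hP, form_sum_left]
    refine Finset.sum_nonneg fun C hC => ?_
    rw [form_smul_left]
    refine mul_nonneg (le_of_lt (Finset.mem_filter.mp hC).2) ?_
    rw [form_comm, hN, form_sum_left]
    refine Finset.sum_nonneg fun D hD => ?_
    rw [form_smul_left, form_comm]
    have hCD : C ≠ D := by
      intro h
      have h1 := (Finset.mem_filter.mp hC).2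
      have h2 := (Finset.mem_filter.mp hD).2
      rw [h] at h1
      omega
    exact mul_nonneg (by linarith [(Finset.mem_filter.mp hD).2])
      (hSpair C (hTpS hC) D (hTnS hD) hCD)
  have hid : form v v = form P P + form N N - 2 * form P N := by
    rw [hvPN, form_sub_left, form_comm P (P - N), form_comm N (P - N), form_sub_left,
      form_sub_left, form_comm N P]
    ring
  by_cases hTnE : Tn = ∅
  · have hN0 : N = 0 := by rw [hN, hTnE, Finset.sum_empty]
    have hvP : v = P := by rw [hvPN, hN0, sub_zero]
    refine ⟨Tp.card, fun i => (Tp.equivFin.symm i : Cl r),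
      fun i => (a (Tp.equivFin.symm i : Cl r)).toNat, fun i => hTpS (Tp.equivFin.symm i).2, ?_⟩
    have e1 : ∑ i : Fin Tp.card, ((a (Tp.equivFin.symm i : Cl r)).toNat : ℤ) •
        ((Tp.equivFin.symm i : Cl r)) =
        ∑ x : {x // x ∈ Tp}, ((a (x : Cl r)).toNat : ℤ) • (x : Cl r) :=
      Equiv.sum_comp Tp.equivFin.symm (fun x : {x // x ∈ Tp} => ((a (x : Cl r)).toNat : ℤ) • (x : Cl r))
    have e2 : ∑ x : {x // x ∈ Tp}, ((a (x : Cl r)).toNat : ℤ) • (x : Cl r) =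
        ∑ D ∈ Tp, ((a D).toNat : ℤ) • D :=
      Finset.sum_coe_sort Tp (fun D => ((a D).toNat : ℤ) • D)
    have e3 : ∑ D ∈ Tp, ((a D).toNat : ℤ) • D = P := by
      rw [hP]
      exact Finset.sum_congr rfl fun D hD => by
        rw [Int.toNat_of_nonneg (le_of_lt (Finset.mem_filter.mp hD).2)]
    rw [hvP, e1, e2, e3]
  · obtain ⟨D0, hD0⟩ := Finset.nonempty_iff_ne_empty.mpr hTnE
    have hNL : 0 < form N (Lcl r) := by
      rw [hN, form_sum_left]
      refine Finset.sum_pos (fun D hD => ?_) ⟨D0, hD0⟩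
      rw [form_smul_left]
      exact mul_pos (by linarith [(Finset.mem_filter.mp hD).2]) (hSL D (hTnS hD))
    have hNne : N ≠ 0 := fun h => by rw [h, form_zero_left] at hNL; omega
    have hNd := negdef hr N hNK
    have hN2 : form N N ≤ -2 := by
      obtain ⟨k, hk⟩ := form_even N hNK
      have h1 : form N N ≤ 0 := hNd.1
      have h2 : form N N ≠ 0 := fun h => hNne (hNd.2 h)
      omega
    have hPd := negdef hr P hPK
    have hPz : P = 0 := hPd.2 (le_antisymm hPd.1 (by linarith [hid, hv2]))
    have hvL' : form v (Lcl r) = -form N (Lcl r) := by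
      rw [hvPN, hPz, zero_sub, form_neg_left]
    rw [hvL'] at hvL
    omega
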